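/- Let X be a monotone convergence space. Then X equipped with its core compactly generated topology is again a monotone convergence space. -/

import Mathlib

open Set TopologicalSpace

universe u

section OrderDefs

variable {X : Type u}

/-- `U` is an upper set with respect to the relation `le`. -/
def IsUpperSetWrt (le : X → X → Prop) (U : Set X) : Prop :=
  ∀ ⦃x⦄, x ∈ U → ∀ ⦃y⦄, le x y → y ∈ U

/-- `s` is an upper bound of `D` with respect to `le`. -/
def IsUBWrt (le : X → X → Prop) (D : Set X) (s : X) : Prop := ∀ d ∈ D, le d s

/-- `s` is a least upper bound (supremum) of `D` with respect to `le`. -/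
def IsSupWrt (le : X → X → Prop) (D : Set X) (s : X) : Prop :=
  IsUBWrt le D s ∧ ∀ t, IsUBWrt le D t → le s t

/-- `D` is a (nonempty) directed subset with respect to `le`. -/
def DirectedSubset (le : X → X → Prop) (D : Set X) : Prop :=
  D.Nonempty ∧ ∀ a ∈ D, ∀ b ∈ D, ∃ c ∈ D, le a c ∧ le b c

/-- `U` is Scott open with respect to `le`: an upper set inaccessible by directed suprema. -/
def ScottOpenWrt (le : X → X → Prop) (U : Set X) : Prop :=
  IsUpperSetWrt le U ∧
    ∀ D, DirectedSubset le D → ∀ s, IsSupWrt le D s → s ∈ U → (D ∩ U).Nonempty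

/-- The Scott topology determined by the relation `le`. -/
def scottTop (le : X → X → Prop) : TopologicalSpace X where
  IsOpen := ScottOpenWrt le
  isOpen_univ := by
    refine ⟨fun x _ y _ => trivial, fun D hD s _ _ => ?_⟩
    obtain ⟨d, hd⟩ := hD.1
    exact ⟨d, hd, trivial⟩
  isOpen_inter := by
    rintro U V ⟨hUup, hUd⟩ ⟨hVup, hVd⟩
    refine ⟨fun x hx y hxy => ⟨hUup hx.1 hxy, hVup hx.2 hxy⟩, ?_⟩
    rintro D hD s hs ⟨hsU, hsV⟩
    obtain ⟨a, haD, haU⟩ := hUd D hD s hs hsU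
    obtain ⟨b, hbD, hbV⟩ := hVd D hD s hs hsV
    obtain ⟨c, hcD, hac, hbc⟩ := hD.2 a haD b hbD
    exact ⟨c, hcD, hUup haU hac, hVup hbV hbc⟩
  isOpen_sUnion := by
    intro S hS
    refine ⟨fun x hx y hxy => ?_, ?_⟩
    · obtain ⟨U, hU, hxU⟩ := hx
      exact ⟨U, hU, (hS U hU).1 hxU hxy⟩
    · rintro D hD s hs ⟨U, hU, hsU⟩
      obtain ⟨d, hdD, hdU⟩ := (hS U hU).2 D hD s hs hsU
      exact ⟨d, hdD, U, hU, hdU⟩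

end OrderDefs

section TopDefs

variable {X : Type u} [TopologicalSpace X]

/-- The specialization order of a topological space: `x ≤ y` iff `x ∈ cl {y}`. -/
def specLE (x y : X) : Prop := x ∈ closure ({y} : Set X)

/-- The upward closure of `A` in the specialization order. -/
def upSet (A : Set X) : Set X := {y | ∃ a ∈ A, specLE a y}

/-- `V` is way below `U`: every open cover of `U` admits a finite subfamily covering `V`. -/
def WayBelow (V U : Set X) : Prop :=
  ∀ S : Set (Set X), (∀ W ∈ S, IsOpen W) → U ⊆ ⋃₀ S →
    ∃ F : Finset (Set X), ↑F ⊆ S ∧ V ⊆ ⋃₀ (F : Set (Set X))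

/-- A space is core compact if its lattice of open sets is continuous, i.e. every open
set is the union of the open sets way below it. -/
def CoreCompact (X : Type u) [TopologicalSpace X] : Prop :=
  ∀ U : Set X, IsOpen U → ∀ x ∈ U, ∃ V : Set X, IsOpen V ∧ x ∈ V ∧ WayBelow V U

/-- `V` is open in the core compactly generated topology:
preimages under every continuous map from a core compact space are open. -/
def ccgOpen (X : Type u) [TopologicalSpace X] (V : Set X) : Prop :=
  ∀ (C : Type u) (tC : TopologicalSpace C), CoreCompact C →
    ∀ ρ : C → X, Continuous ρ → IsOpen (ρ ⁻¹' V)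

/-- The core compactly generated topology `𝒞X`. -/
def ccgTopology (X : Type u) [TopologicalSpace X] : TopologicalSpace X where
  IsOpen := ccgOpen X
  isOpen_univ := by intro C tC _ ρ hρ; simpa using isOpen_univ
  isOpen_inter := by
    intro U V hU hV C tC hc ρ hρ
    exact (hU C tC hc ρ hρ).inter (hV C tC hc ρ hρ)
  isOpen_sUnion := by
    intro S hS C tC hc ρ hρ
    rw [preimage_sUnion]
    exact isOpen_biUnion fun t ht => hS t ht C tC hc ρ hρ

/-- A space is core compactly generated if its topology coincides with the
core compactly generated topology. -/
def CCGenerated (X : Type u) [t : TopologicalSpace X] : Prop := ccgTopology X = t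

/-- A set is saturated if it is the intersection of the open sets containing it. -/
def Saturated (K : Set X) : Prop := K = ⋂₀ {U : Set X | IsOpen U ∧ K ⊆ U}

/-- A T₀ space is well-filtered if every filtered family of nonempty compact saturated sets
whose intersection is contained in an open set has a member contained in that open set. -/
def WellFiltered (X : Type u) [TopologicalSpace X] : Prop :=
  T0Space X ∧ ∀ 𝒦 : Set (Set X), 𝒦.Nonempty →
    (∀ K ∈ 𝒦, K.Nonempty ∧ IsCompact K ∧ Saturated K) →
    (∀ K₁ ∈ 𝒦, ∀ K₂ ∈ 𝒦, ∃ K₃ ∈ 𝒦, K₃ ⊆ K₁ ∧ K₃ ⊆ K₂) →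
    ∀ U : Set X, IsOpen U → ⋂₀ 𝒦 ⊆ U → ∃ K ∈ 𝒦, K ⊆ U

/-- A T₀ space is ω-well-filtered if the well-filteredness condition holds for
countable filtered families of nonempty compact saturated sets. -/
def OmegaWellFiltered (X : Type u) [TopologicalSpace X] : Prop :=
  T0Space X ∧ ∀ K : ℕ → Set X,
    (∀ n, (K n).Nonempty ∧ IsCompact (K n) ∧ Saturated (K n)) →
    (∀ m n, ∃ k, K k ⊆ K m ∧ K k ⊆ K n) →
    ∀ U : Set X, IsOpen U → (⋂ n, K n) ⊆ U → ∃ n, K n ⊆ U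

/-- A space is sober if it is T₀ and every irreducible closed set is the closure of a
(unique) point. -/
def SoberSpace (X : Type u) [TopologicalSpace X] : Prop :=
  T0Space X ∧ ∀ A : Set X, IsIrreducible A → IsClosed A → ∃! x : X, A = closure ({x} : Set X)

/-- A T₀ space is a monotone convergence space if the closure of every directed subset
(in the specialization order) is the closure of a point. -/
def MonotoneConvergenceSpace (X : Type u) [TopologicalSpace X] : Prop :=
  T0Space X ∧ ∀ D : Set X, DirectedSubset specLE D → ∃ x : X, closure D = closure ({x} : Set X)

/-- The hull-kernel style topology on a family of subsets of `X`, generated by the sets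
`U^s = {A | A ∩ U ≠ ∅}` for `U` open in `X`. -/
def hullTop (S : Set X → Prop) : TopologicalSpace {A : Set X // S A} :=
  generateFrom {s : Set {A : Set X // S A} |
    ∃ U : Set X, IsOpen U ∧ s = {A : {A : Set X // S A} | ((A : Set X) ∩ U).Nonempty}}

end TopDefs


section Aux

variable {X : Type u} [tX : TopologicalSpace X]

lemma specLE_refl (x : X) : specLE x x := subset_closure rfl

lemma specLE_trans {a b c : X} (h1 : specLE a b) (h2 : specLE b c) : specLE a c := by
  have : closure ({b} : Set X) ⊆ closure ({c} : Set X) :=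
    closure_minimal (singleton_subset_iff.mpr h2) isClosed_closure
  exact this h1

lemma isOpen_upper {U : Set X} (hU : IsOpen U) {a b : X} (ha : a ∈ U) (hab : specLE a b) :
    b ∈ U := by
  rcases mem_closure_iff.mp hab U hU ha with ⟨y, hyU, hy⟩
  rcases hy with rfl
  exact hyU

lemma specLE_iff_forall {x y : X} : specLE x y ↔ ∀ U : Set X, IsOpen U → x ∈ U → y ∈ U := by
  constructor
  · intro h U hU hx; exact isOpen_upper hU hx h
  · intro h
    rw [specLE, mem_closure_iff]
    intro U hU hx
    exact ⟨y, h U hU hx, rfl⟩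

lemma mem_closure_iff' {X : Type u} (t : TopologicalSpace X) {s : Set X} {x : X} :
    x ∈ @closure X t s ↔ ∀ o, t.IsOpen o → x ∈ o → (o ∩ s).Nonempty := by
  letI := t; exact mem_closure_iff

lemma closure_minimal' {X : Type u} (t : TopologicalSpace X) {s u : Set X}
    (h₁ : s ⊆ u) (h₂ : @IsClosed X t u) : @closure X t s ⊆ u := by
  letI := t; exact closure_minimal h₁ h₂

lemma ccg_isOpen_of_isOpen {U : Set X} (hU : IsOpen U) : ccgOpen X U :=
  fun _ _ _ _ hρ => hρ.isOpen_preimage U hU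

/-- The Sierpiński space as a topology on `ULift Bool`. -/
def sierpTop : TopologicalSpace (ULift.{u} Bool) where
  IsOpen U := (⟨false⟩ : ULift Bool) ∈ U → (⟨true⟩ : ULift Bool) ∈ U
  isOpen_univ := fun _ => trivial
  isOpen_inter := fun U V hU hV h => ⟨hU h.1, hV h.2⟩
  isOpen_sUnion := fun S hS h => by
    obtain ⟨U, hU, hfU⟩ := h
    exact ⟨U, hU, hS U hU hfU⟩

lemma sierp_cases (r : ULift.{u} Bool) : r = ⟨true⟩ ∨ r = ⟨false⟩ := by
  rcases r with ⟨_ | _⟩ <;> simp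

lemma sierp_coreCompact : @CoreCompact (ULift.{u} Bool) sierpTop := by
  intro U hU p hp
  refine ⟨U, hU, hp, ?_⟩
  intro S hS hcov
  by_cases hfU : (⟨false⟩ : ULift.{u} Bool) ∈ U
  · obtain ⟨W, hWS, hfW⟩ := hcov hfU
    refine ⟨{W}, by simpa using hWS, fun q hq => ⟨W, by simp, ?_⟩⟩
    rcases sierp_cases q with rfl | rfl
    · exact hS W hWS hfW
    · exact hfW
  · by_cases htU : (⟨true⟩ : ULift.{u} Bool) ∈ U
    · obtain ⟨W, hWS, htW⟩ := hcov htU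
      refine ⟨{W}, by simpa using hWS, fun q hq => ⟨W, by simp, ?_⟩⟩
      rcases sierp_cases q with rfl | rfl
      · exact htW
      · exact absurd hq hfU
    · refine ⟨∅, by simp, fun q hq => ?_⟩
      rcases sierp_cases q with rfl | rfl
      · exact absurd hq htU
      · exact absurd hq hfU

lemma specLE_ccg_iff {x y : X} :
    @specLE X (ccgTopology X) x y ↔ specLE x y := by
  constructor
  · intro h
    rw [specLE_iff_forall]
    intro U hU hx
    exact (@specLE_iff_forall X (ccgTopology X) x y).mp h U (ccg_isOpen_of_isOpen hU) hx
  · intro h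
    rw [@specLE_iff_forall X (ccgTopology X)]
    intro V hV hx
    set ρ : ULift.{u} Bool → X := fun b => if b.down then y else x with hρdef
    have hcont : @Continuous _ _ sierpTop tX ρ := by
      rw [@continuous_def _ _ sierpTop tX]
      intro U hU hf
      have hxU : x ∈ U := by simpa [hρdef] using hf
      simp only [Set.mem_preimage, hρdef]
      simpa using isOpen_upper hU hxU h
    have hopen := hV (ULift.{u} Bool) sierpTop sierp_coreCompact ρ hcont
    have hf : (⟨false⟩ : ULift.{u} Bool) ∈ ρ ⁻¹' V := by simpa [hρdef] using hx
    simpa [hρdef] using hopen hf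

/-- The auxiliary space: a directed set `D` together with a point `x`. -/
def dirTop (D : Set X) (x : X) (hD : DirectedSubset specLE D) :
    TopologicalSpace {p : X // p ∈ D ∨ p = x} where
  IsOpen U := (∀ a ∈ U, ∀ b : {p : X // p ∈ D ∨ p = x}, specLE a.1 b.1 → b ∈ U) ∧
    ((⟨x, Or.inr rfl⟩ : {p : X // p ∈ D ∨ p = x}) ∈ U →
      ∃ d : {p : X // p ∈ D ∨ p = x}, d.1 ∈ D ∧ d ∈ U)
  isOpen_univ := by
    refine ⟨fun _ _ _ _ => trivial, fun _ => ?_⟩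
    obtain ⟨d, hd⟩ := hD.1
    exact ⟨⟨d, Or.inl hd⟩, hd, trivial⟩
  isOpen_inter := by
    rintro U V ⟨hUup, hUx⟩ ⟨hVup, hVx⟩
    refine ⟨fun a ha b hab => ⟨hUup a ha.1 b hab, hVup a ha.2 b hab⟩, ?_⟩
    rintro ⟨hxU, hxV⟩
    obtain ⟨d1, hd1D, hd1U⟩ := hUx hxU
    obtain ⟨d2, hd2D, hd2V⟩ := hVx hxV
    obtain ⟨c, hcD, h1c, h2c⟩ := hD.2 d1.1 hd1D d2.1 hd2D
    exact ⟨⟨c, Or.inl hcD⟩, hcD, hUup d1 hd1U _ h1c, hVup d2 hd2V _ h2c⟩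
  isOpen_sUnion := by
    intro S hS
    refine ⟨fun a ha b hab => ?_, fun hx => ?_⟩
    · obtain ⟨U, hU, haU⟩ := ha
      exact ⟨U, hU, (hS U hU).1 a haU b hab⟩
    · obtain ⟨U, hU, hxU⟩ := hx
      obtain ⟨d, hdD, hdU⟩ := (hS U hU).2 hxU
      exact ⟨d, hdD, U, hU, hdU⟩

lemma dir_coreCompact (D : Set X) (x : X) (hD : DirectedSubset specLE D)
    (hub : ∀ d ∈ D, specLE d x) :
    @CoreCompact {p : X // p ∈ D ∨ p = x} (dirTop D x hD) := by
  intro U hU p hp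
  obtain ⟨hUup, hUx⟩ := hU
  -- find d ∈ D with point in U and specLE d p
  have key : ∃ d : {p : X // p ∈ D ∨ p = x}, d.1 ∈ D ∧ d ∈ U ∧ specLE d.1 p.1 := by
    rcases p.2 with hpD | hpx
    · exact ⟨p, hpD, hp, specLE_refl _⟩
    · have hp' : (⟨x, Or.inr rfl⟩ : {p : X // p ∈ D ∨ p = x}) ∈ U := by
        have : p = ⟨x, Or.inr rfl⟩ := Subtype.ext hpx
        rwa [this] at hp
      obtain ⟨d, hdD, hdU⟩ := hUx hp'
      exact ⟨d, hdD, hdU, by rw [hpx]; exact hub d.1 hdD⟩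
  obtain ⟨d, hdD, hdU, hdp⟩ := key
  refine ⟨{q | specLE d.1 q.1}, ⟨?_, ?_⟩, hdp, ?_⟩
  · exact fun a ha b hab => specLE_trans ha hab
  · exact fun _ => ⟨d, hdD, specLE_refl _⟩
  · intro S hS hcov
    obtain ⟨W, hWS, hdW⟩ := hcov hdU
    exact ⟨{W}, by simpa using hWS, fun q hq => ⟨W, by simp, (hS W hWS).1 d hdW q hq⟩⟩

end Aux

/-- a monotone convergence space equipped with its core compactly generated
topology is again a monotone convergence space. -/
theorem stmt10 {X : Type u} [tX : TopologicalSpace X] (h : MonotoneConvergenceSpace X) :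
    @MonotoneConvergenceSpace X (ccgTopology X) := by
  obtain ⟨ht0, hmc⟩ := h
  constructor
  · -- T0
    refine @t0Space_iff_inseparable X (ccgTopology X) |>.mpr fun a b hab => ?_
    have : @Inseparable X tX a b := by
      rw [inseparable_iff_forall_isOpen]
      intro U hU
      exact (@inseparable_iff_forall_isOpen X (ccgTopology X) a b).mp hab U
        (ccg_isOpen_of_isOpen hU)
    exact this.eq
  · intro D hD'
    have hD : DirectedSubset specLE D := by
      refine ⟨hD'.1, fun a ha b hb => ?_⟩
      obtain ⟨c, hc, hac, hbc⟩ := hD'.2 a ha b hb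
      exact ⟨c, hc, specLE_ccg_iff.mp hac, specLE_ccg_iff.mp hbc⟩
    obtain ⟨x, hx⟩ := hmc D hD
    have hub : ∀ d ∈ D, specLE d x := by
      intro d hd
      have : d ∈ closure ({x} : Set X) := hx ▸ subset_closure hd
      exact this
    have hxcl : x ∈ closure D := hx ▸ subset_closure rfl
    refine ⟨x, ?_⟩
    have hxccg : x ∈ @closure X (ccgTopology X) D := by
      rw [mem_closure_iff' (ccgTopology X)]
      intro V hV hxV
      set C := {p : X // p ∈ D ∨ p = x}
      set ρ : C → X := Subtype.val with hρdef
      have hcont : @Continuous C X (dirTop D x hD) tX ρ := by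
        rw [@continuous_def _ _ (dirTop D x hD) tX]
        intro U hU
        refine ⟨fun a ha b hab => isOpen_upper hU ha hab, fun hxp => ?_⟩
        have hxU : x ∈ U := hxp
        obtain ⟨d, hdU, hdD⟩ := mem_closure_iff.mp hxcl U hU hxU
        exact ⟨⟨d, Or.inl hdD⟩, hdD, hdU⟩
      have hopen := hV C (dirTop D x hD) (dir_coreCompact D x hD hub) ρ hcont
      have hxp : (⟨x, Or.inr rfl⟩ : C) ∈ ρ ⁻¹' V := hxV
      obtain ⟨d, hdD, hdV⟩ := hopen.2 hxp
      exact ⟨d.1, hdV, hdD⟩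
    apply le_antisymm
    · refine closure_minimal' (ccgTopology X) ?_ (@isClosed_closure X (ccgTopology X) _) 
      intro d hd
      exact specLE_ccg_iff.mpr (hub d hd)
    · refine closure_minimal' (ccgTopology X) ?_ (@isClosed_closure X (ccgTopology X) _)
      simpa using hxccg
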